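/- Every strongly tree-based phylogenetic network N has a 3-basis G with χ(G) ≤ 2. More precisely, there exist a spanning tree T of N, disjoint sets A, B partitioning V(N), and a map 𝔟 : A → 𝒫(B) such that (T, A, B, 𝔟) represents N, no non-trivial block of T contains a vertex of A (trivially, since T is a tree), deg_T(a) ≥ 2 and deg_T(a) + |𝔟(a)| ≤ 3 for all a ∈ A, and χ(T) ≤ 2. -/

import Mathlib

open SimpleGraph

/-- Degree of a vertex: the cardinality of its neighbor set. -/
noncomputable def ndeg {V : Type*} (G : SimpleGraph V) (v : V) : ℕ := (G.neighborSet v).ncard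

/-- A subgraph has no cut vertex: deleting any vertex leaves it connected (if nonempty). -/
def NoCutVertex {V : Type*} {G : SimpleGraph V} (H : G.Subgraph) : Prop :=
  ∀ v ∈ H.verts, (H.deleteVerts {v}).verts.Nonempty → (H.deleteVerts {v}).Connected

/-- A block of G: a maximal connected subgraph without a cut vertex. -/
def IsBlock {V : Type*} (G : SimpleGraph V) (H : G.Subgraph) : Prop :=
  H.Connected ∧ NoCutVertex H ∧
    ∀ H' : G.Subgraph, H ≤ H' → H'.Connected → NoCutVertex H' → H' = H

/-- The graph represented by (G, A, B, b): G together with all edges {a, z} for a ∈ A, z ∈ b a. -/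
def repGraph {V : Type*} (G : SimpleGraph V) (A : Set V) (b : V → Set V) : SimpleGraph V :=
  G ⊔ SimpleGraph.fromRel (fun u v => u ∈ A ∧ v ∈ b u)

/-- T is a spanning tree of G witnessing strong tree-basedness: T is a spanning tree whose
leaves are exactly the leaves of G, every edge of G between vertices of G-degree ≥ 4 is an
edge of T, and every vertex of T-degree 2 has G-degree 3. -/
def IsSTBWitness {V : Type*} (G T : SimpleGraph V) : Prop :=
  T ≤ G ∧ T.IsTree ∧ (∀ v, ndeg T v = 1 ↔ ndeg G v = 1) ∧
    (∀ u v, G.Adj u v → 4 ≤ ndeg G u → 4 ≤ ndeg G v → T.Adj u v) ∧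
    (∀ v, ndeg T v = 2 → ndeg G v = 3)

section Aux

variable {V : Type*}

/-- In a path between distinct vertices, either the endpoints are adjacent, or some vertex
has two distinct neighbours. -/
lemma aux_walk_middle {H : SimpleGraph V} {x y : V} (p : H.Walk x y) (hp : p.IsPath)
    (hne : x ≠ y) : H.Adj x y ∨ ∃ v u w, H.Adj v u ∧ H.Adj v w ∧ u ≠ w := by
  cases p with
  | nil => exact absurd rfl hne
  | @cons _ m _ h q =>
    cases q with
    | nil => exact Or.inl h
    | @cons _ n _ h' q' =>
      refine Or.inr ⟨m, x, n, h.symm, h', ?_⟩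
      rw [SimpleGraph.Walk.cons_isPath_iff] at hp
      intro hxn
      apply hp.2
      rw [hxn, SimpleGraph.Walk.support_cons]
      exact List.mem_cons_of_mem _ q'.start_mem_support

/-- A subgraph of a tree that is connected, has no cut vertex, and more than 2 vertices
is impossible. -/
lemma aux_tree_block [Fintype V] {T : SimpleGraph V} (hT : T.IsTree) (Z : T.Subgraph)
    (hZc : Z.Connected) (hNC : NoCutVertex Z) (hcard : 2 < Z.verts.ncard) : False := by
  classical
  obtain ⟨a, ha, c, hc, d, hd, hac, had, hcd⟩ := (Set.two_lt_ncard (Set.toFinite _)).mp hcard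
  obtain ⟨v, u, w, hvu, hvw, huw⟩ : ∃ v u w : V, Z.Adj v u ∧ Z.Adj v w ∧ u ≠ w := by
    have hsub : ∀ (s t : Z.verts), s ≠ t → Z.coe.Adj s t ∨
        ∃ v u w : Z.verts, Z.coe.Adj v u ∧ Z.coe.Adj v w ∧ u ≠ w := by
      intro s t hst
      obtain ⟨p⟩ := hZc s t
      exact aux_walk_middle p.bypass p.bypass_isPath hst
    have hlift : (∃ v u w : Z.verts, Z.coe.Adj v u ∧ Z.coe.Adj v w ∧ u ≠ w) →
        ∃ v u w : V, Z.Adj v u ∧ Z.Adj v w ∧ u ≠ w := by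
      rintro ⟨v, u, w, h1, h2, h3⟩
      exact ⟨v, u, w, h1, h2, fun hh => h3 (Subtype.val_injective hh)⟩
    rcases hsub ⟨c, hc⟩ ⟨d, hd⟩ (fun hh => hcd (congrArg Subtype.val hh)) with hcd' | hmid
    · rcases hsub ⟨a, ha⟩ ⟨c, hc⟩ (fun hh => hac (congrArg Subtype.val hh)) with hac' | hmid
      · exact ⟨c, a, d, hac'.symm, hcd', had⟩
      · exact hlift hmid
    · exact hlift hmid
  have hvZ : v ∈ Z.verts := Z.edge_vert hvu
  have huv : u ≠ v := (hvu.symm).ne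
  have hwv : w ≠ v := (hvw.symm).ne
  have huD : u ∈ (Z.deleteVerts {v}).verts := by
    rw [Subgraph.deleteVerts_verts]; exact ⟨Z.edge_vert hvu.symm, by simp [huv]⟩
  have hwD : w ∈ (Z.deleteVerts {v}).verts := by
    rw [Subgraph.deleteVerts_verts]; exact ⟨Z.edge_vert hvw.symm, by simp [hwv]⟩
  have hconnD := hNC v hvZ ⟨u, huD⟩
  obtain ⟨W⟩ := hconnD ⟨u, huD⟩ ⟨w, hwD⟩
  let P1 : T.Walk u w := (W.map (Z.deleteVerts {v}).hom).bypass
  have hP1path : P1.IsPath := (W.map _).bypass_isPath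
  have hvP1 : v ∉ P1.support := by
    intro hmem
    have hmem' := (W.map (Z.deleteVerts {v}).hom).support_bypass_subset hmem
    rw [SimpleGraph.Walk.support_map] at hmem'
    obtain ⟨s, _, hsv⟩ := List.mem_map.mp hmem'
    have hs3 : (s : V) ∈ Z.verts \ {v} := s.2
    exact hs3.2 hsv
  have huvT : T.Adj u v := (Z.adj_sub hvu).symm
  have hvwT : T.Adj v w := Z.adj_sub hvw
  let P2 : T.Walk u w := Walk.cons huvT (Walk.cons hvwT Walk.nil)
  have hP2path : P2.IsPath := by
    rw [SimpleGraph.Walk.isPath_def]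
    simp [P2, huv, hwv, huw, Ne.symm hwv, Ne.symm huv]
  have hvP2 : v ∈ P2.support := by simp [P2]
  obtain ⟨P, hP, hPu⟩ := hT.existsUnique_path u w
  have h12 : P1 = P2 := (hPu P1 hP1path).trans (hPu P2 hP2path).symm
  rw [h12] at hvP1
  exact hvP1 hvP2

/-- In a tree, adjacent vertices have different distances from any root. -/
lemma aux_tree_dist_ne {T : SimpleGraph V} (hT : T.IsTree) (r : V) {v w : V}
    (h : T.Adj v w) : T.dist r v ≠ T.dist r w := by
  classical
  intro heq
  have hc := hT.isConnected
  obtain ⟨p0, hp0⟩ := hc.exists_walk_length_eq_dist r v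
  obtain ⟨q0, hq0⟩ := hc.exists_walk_length_eq_dist r w
  have hp : p0.bypass.IsPath := p0.bypass_isPath
  have hq : q0.bypass.IsPath := q0.bypass_isPath
  have hplen : p0.bypass.length = T.dist r v :=
    le_antisymm (hp0 ▸ p0.length_bypass_le) (dist_le _)
  have hqlen : q0.bypass.length = T.dist r w :=
    le_antisymm (hq0 ▸ q0.length_bypass_le) (dist_le _)
  obtain ⟨Q, hQ, hQu⟩ := hT.existsUnique_path r w
  by_cases hw : w ∈ p0.bypass.support
  · have h1 : (p0.bypass.takeUntil w hw).IsPath := hp.takeUntil hw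
    have heqq : p0.bypass.takeUntil w hw = q0.bypass :=
      (hQu _ h1).trans (hQu _ hq).symm
    have hsplit := congrArg Walk.length (p0.bypass.take_spec hw)
    rw [SimpleGraph.Walk.length_append] at hsplit
    have hlen2 := congrArg Walk.length heqq
    have hdrop : (p0.bypass.dropUntil w hw).length = 0 := by omega
    exact h.ne (Walk.eq_of_length_eq_zero hdrop).symm
  · have hcp : (p0.bypass.concat h).IsPath := by
      rw [SimpleGraph.Walk.isPath_def, SimpleGraph.Walk.support_concat,
        List.nodup_append]
      refine ⟨hp.support_nodup, List.nodup_singleton _, ?_⟩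
      intro x hx y hy hxy
      rw [List.mem_singleton] at hy
      subst hy hxy
      exact hw hx
    have heqq : p0.bypass.concat h = q0.bypass := (hQu _ hcp).trans (hQu _ hq).symm
    have hlen2 := congrArg Walk.length heqq
    rw [SimpleGraph.Walk.length_concat] at hlen2
    omega

/-- Trees have chromatic number at most 2. -/
lemma aux_tree_chromatic {T : SimpleGraph V} (hT : T.IsTree) : T.chromaticNumber ≤ 2 := by
  have hc := hT.isConnected
  obtain ⟨r⟩ := hc.nonempty
  have hcol : T.Colorable 2 := by
    refine ⟨Coloring.mk (fun v => ⟨T.dist r v % 2, Nat.mod_lt _ (by norm_num)⟩) ?_⟩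
    intro v w h hvw
    have h1 : T.dist r v ≠ T.dist r w := aux_tree_dist_ne hT r h
    have hd1 : T.dist v w ≤ 1 := by
      have := dist_le (Walk.cons h (Walk.nil : T.Walk w w))
      simpa using this
    have hd2 : T.dist w v ≤ 1 := by
      have := dist_le (Walk.cons h.symm (Walk.nil : T.Walk v v))
      simpa using this
    have h2 : T.dist r w ≤ T.dist r v + T.dist v w := hc.dist_triangle
    have h3 : T.dist r v ≤ T.dist r w + T.dist w v := hc.dist_triangle
    have h4 := congrArg Fin.val hvw
    simp only at h4
    omega
  have := hcol.chromaticNumber_le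
  exact_mod_cast this

end Aux

/-- Every strongly tree-based network N has a 3-basis T (a spanning tree) with χ(T) ≤ 2. -/
theorem stmt_8 {V : Type*} [Fintype V] (N : SimpleGraph V) (hconn : N.Connected)
    (hno2 : ∀ v, ndeg N v ≠ 2) (hstb : ∃ T, IsSTBWitness N T) :
    ∃ (T : SimpleGraph V) (A B : Set V) (b : V → Set V),
      T ≤ N ∧ T.IsTree ∧
      A ∪ B = Set.univ ∧ Disjoint A B ∧ (∀ a ∈ A, b a ⊆ B) ∧
      N = repGraph T A b ∧
      (∀ Z : T.Subgraph, IsBlock T Z → 2 < Z.verts.ncard → ∀ a ∈ A, a ∉ Z.verts) ∧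
      (∀ a ∈ A, 2 ≤ ndeg T a) ∧
      (∀ a ∈ A, ndeg T a + (b a).ncard ≤ 3) ∧
      T.chromaticNumber ≤ 2 := by
  classical
  obtain ⟨T, hle, htree, hleaf, h4, h23⟩ := hstb
  let f : V → ℕ := fun v => (Fintype.equivFin V v : ℕ)
  have hf : Function.Injective f := fun a b h =>
    (Fintype.equivFin V).injective (Fin.val_injective h)
  let Ext : V → V → Prop := fun u v => N.Adj u v ∧ ¬ T.Adj u v
  let b : V → Set V := fun v => {z | Ext v z}
  let A : Set V := {v | ndeg N v = 3 ∧ ∃ z, Ext v z ∧ (ndeg N z = 3 → f v < f z)}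
  have hTnbr : ∀ x z : V, N.Adj x z → ∃ y, T.Adj x y := by
    intro x z hxz
    obtain ⟨wlk⟩ := htree.isConnected x z
    cases wlk with
    | nil => exact absurd rfl hxz.ne
    | cons h q => exact ⟨_, h⟩
  -- any endpoint of an extra edge with N-degree ≤ 3 has N-degree exactly 3
  have key : ∀ x z : V, Ext x z → ndeg N x ≤ 3 → ndeg N x = 3 := by
    intro x z hxz hx3
    have h2 := hno2 x
    have h1 : ndeg N x ≠ 1 := by
      intro h1
      have hT1 : ndeg T x = 1 := (hleaf x).mpr h1
      have hsub : T.neighborSet x ⊆ N.neighborSet x := fun y hy => hle hy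
      have heq : T.neighborSet x = N.neighborSet x :=
        Set.eq_of_subset_of_ncard_le hsub (by
          show (N.neighborSet x).ncard ≤ (T.neighborSet x).ncard
          rw [show (T.neighborSet x).ncard = ndeg T x from rfl, hT1,
            show (N.neighborSet x).ncard = ndeg N x from rfl, h1]) (Set.toFinite _)
      have : z ∈ T.neighborSet x := heq ▸ (hxz.1 : z ∈ N.neighborSet x)
      exact hxz.2 this
    have h0 : ndeg N x ≠ 0 := by
      intro h0
      have : (N.neighborSet x) = ∅ := by
        rw [← Set.ncard_eq_zero (Set.toFinite _)]; exact h0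
      have hz : z ∈ N.neighborSet x := hxz.1
      rw [this] at hz
      exact hz
    omega
  have hdeg3 : ∀ u v : V, Ext u v → ndeg N u = 3 ∨ ndeg N v = 3 := by
    intro u v hext
    have h4' : ¬(4 ≤ ndeg N u ∧ 4 ≤ ndeg N v) := fun ⟨a1, a2⟩ =>
      hext.2 (h4 u v hext.1 a1 a2)
    by_cases hu : ndeg N u ≤ 3
    · exact Or.inl (key u v hext hu)
    · refine Or.inr (key v u ⟨hext.1.symm, fun hh => hext.2 hh.symm⟩ ?_)
      omega
  -- uniqueness of the extra neighbour of a degree-3 vertex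
  have huniq : ∀ x z z' : V, ndeg N x = 3 → Ext x z → Ext x z' → z = z' := by
    intro x z z' hx3 hz hz'
    by_contra hne
    have hzz : ({z, z'} : Set V) ⊆ N.neighborSet x := by
      rintro y (rfl | rfl)
      exacts [hz.1, hz'.1]
    have hsub : T.neighborSet x ⊆ N.neighborSet x \ {z, z'} := by
      intro y hy
      refine ⟨hle hy, ?_⟩
      rintro (rfl | rfl)
      exacts [hz.2 hy, hz'.2 hy]
    have hcard : (N.neighborSet x \ ({z, z'} : Set V)).ncard = 1 := by
      rw [Set.ncard_diff hzz (Set.toFinite _), Set.ncard_pair hne,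
        show (N.neighborSet x).ncard = ndeg N x from rfl, hx3]
    have hT1 : ndeg T x ≤ 1 := by
      calc ndeg T x ≤ (N.neighborSet x \ ({z, z'} : Set V)).ncard :=
            Set.ncard_le_ncard hsub (Set.toFinite _)
        _ = 1 := hcard
    rcases Nat.le_one_iff_eq_zero_or_eq_one.mp hT1 with h0 | h1
    · obtain ⟨y, hy⟩ := hTnbr x z hz.1
      have hempty : T.neighborSet x = ∅ := by
        rw [← Set.ncard_eq_zero (Set.toFinite _)]; exact h0
      have : y ∈ T.neighborSet x := hy
      rw [hempty] at this
      exact this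
    · have := (hleaf x).mp h1
      omega
  -- every A-vertex has T-degree exactly 2
  have hdegT2 : ∀ x z : V, ndeg N x = 3 → Ext x z → ndeg T x = 2 := by
    intro x z hx3 hz
    have hzmem : ({z} : Set V) ⊆ N.neighborSet x := by
      rintro y rfl
      exact hz.1
    have hsub : T.neighborSet x ⊆ N.neighborSet x \ {z} := by
      intro y hy
      refine ⟨hle hy, ?_⟩
      rintro rfl
      exact hz.2 hy
    have hc1 : (N.neighborSet x \ ({z} : Set V)).ncard = 2 := by
      rw [Set.ncard_diff hzmem (Set.toFinite _), Set.ncard_singleton,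
        show (N.neighborSet x).ncard = ndeg N x from rfl, hx3]
    have hle2 : ndeg T x ≤ 2 := by
      calc ndeg T x ≤ (N.neighborSet x \ ({z} : Set V)).ncard :=
            Set.ncard_le_ncard hsub (Set.toFinite _)
        _ = 2 := hc1
    have hne1 : ndeg T x ≠ 1 := by
      intro h1
      have := (hleaf x).mp h1
      omega
    have hne0 : ndeg T x ≠ 0 := by
      intro h0
      obtain ⟨y, hy⟩ := hTnbr x z hz.1
      have hempty : T.neighborSet x = ∅ := by
        rw [← Set.ncard_eq_zero (Set.toFinite _)]; exact h0
      have : y ∈ T.neighborSet x := hy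
      rw [hempty] at this
      exact this
    omega
  have hbA : ∀ x z : V, ndeg N x = 3 → Ext x z → b x = {z} := by
    intro x z hx3 hz
    ext y
    constructor
    · intro hy
      exact huniq x y z hx3 hy hz
    · rintro rfl
      exact hz
  have hAmem : ∀ u v : V, Ext u v → u ∈ A ∨ v ∈ A := by
    intro u v hext
    have hvext : Ext v u := ⟨hext.1.symm, fun hh => hext.2 hh.symm⟩
    have hfne : f u ≠ f v := fun hh => hext.1.ne (hf hh)
    rcases hdeg3 u v hext with hu3 | hv3
    · by_cases hv3 : ndeg N v = 3
      · rcases lt_or_gt_of_ne hfne with hlt | hgt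
        · exact Or.inl ⟨hu3, v, hext, fun _ => hlt⟩
        · exact Or.inr ⟨hv3, u, hvext, fun _ => hgt⟩
      · exact Or.inl ⟨hu3, v, hext, fun hh => absurd hh hv3⟩
    · by_cases hu3 : ndeg N u = 3
      · rcases lt_or_gt_of_ne hfne with hlt | hgt
        · exact Or.inl ⟨hu3, v, hext, fun _ => hlt⟩
        · exact Or.inr ⟨hv3, u, hvext, fun _ => hgt⟩
      · exact Or.inr ⟨hv3, u, hvext, fun hh => absurd hh hu3⟩
  refine ⟨T, A, Aᶜ, b, hle, htree, Set.union_compl_self A, disjoint_compl_right, ?_, ?_,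
    ?_, ?_, ?_, aux_tree_chromatic htree⟩
  · -- b a ⊆ Aᶜ
    rintro a ⟨ha3, z, hz, hlt⟩ y hy
    simp only [Set.mem_compl_iff]
    rintro ⟨hy3, z', hz', hlt'⟩
    have hyz : y = z := huniq a y z ha3 hy hz
    have hz'a : z' = a := huniq y z' a hy3 hz' ⟨hy.1.symm, fun hh => hy.2 hh.symm⟩
    rw [hz'a] at hlt'
    have h1 : f y < f a := hlt' ha3
    rw [hyz] at hy3 h1
    have h2 : f a < f z := hlt hy3
    omega
  · -- N = repGraph T A b
    ext u v
    simp only [repGraph, sup_adj, fromRel_adj]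
    constructor
    · intro h
      by_cases hT' : T.Adj u v
      · exact Or.inl hT'
      · refine Or.inr ⟨h.ne, ?_⟩
        rcases hAmem u v ⟨h, hT'⟩ with hA | hA
        · exact Or.inl ⟨hA, h, hT'⟩
        · exact Or.inr ⟨hA, h.symm, fun hh => hT' hh.symm⟩
    · rintro (h | ⟨-, ⟨-, h, -⟩ | ⟨-, h, -⟩⟩)
      exacts [hle h, h, h.symm]
  · intro Z hZ hcard a _ haZ
    exact aux_tree_block htree Z hZ.1 hZ.2.1 hcard
  · rintro a ⟨ha3, z, hz, -⟩
    exact (hdegT2 a z ha3 hz).ge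
  · rintro a ⟨ha3, z, hz, -⟩
    rw [hdegT2 a z ha3 hz, hbA a z ha3 hz, Set.ncard_singleton]
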